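/- Let K be a positive integer and let f_{1,μ}, f_{2,μ} : ℝ⁸ → ℂ^{K×K} (μ = 0,1,2,3) be twice continuously differentiable functions satisfying the symmetry relation ∂f_{2,ν}/∂x_1^μ = ∂f_{1,μ}/∂x_2^ν for all μ, ν = 0,…,3 on ℝ⁸. Define g_{j,μν} := ∂f_{j,ν}/∂x_j^μ − ∂f_{j,μ}/∂x_j^ν for j = 1,2. Then g_{1,μν} is independent of x_2 and g_{2,μν} is independent of x_1; that is, g_{1,μν}(x_1,x_2) = g_{1,μν}(x_1,x_2') and g_{2,μν}(x_1,x_2) = g_{2,μν}(x_1',x_2) for all x_1, x_1', x_2, x_2' ∈ ℝ⁴ and all μ,ν. -/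

import Mathlib

/-!
STATEMENT 8: If `∂f_{2,ν}/∂x_1^μ = ∂f_{1,μ}/∂x_2^ν` for C² matrix-valued
functions on ℝ⁸, then `g_{1,μν} := ∂f_{1,ν}/∂x_1^μ − ∂f_{1,μ}/∂x_1^ν` is
independent of `x_2` and `g_{2,μν} := ∂f_{2,ν}/∂x_2^μ − ∂f_{2,μ}/∂x_2^ν` is
independent of `x_1`.
-/

open Matrix

noncomputable section

attribute [local instance] Matrix.normedAddCommGroup Matrix.normedSpace

/-- Two-particle configuration space-time `ℝ⁸ = ℝ⁴ × ℝ⁴`. -/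
abbrev Pt := (Fin 4 → ℝ) × (Fin 4 → ℝ)

/-- The coordinate direction `x_k^μ` in `ℝ⁸`. -/
def dir (k : Fin 2) (μ : Fin 4) : Pt :=
  if k = 0 then (Pi.single μ 1, 0) else (0, Pi.single μ 1)

/-- Partial derivative `∂f/∂x_k^μ` on `ℝ⁸`. -/
def pdk {F : Type*} [NormedAddCommGroup F] [NormedSpace ℝ F]
    (k : Fin 2) (μ : Fin 4) (f : Pt → F) (X : Pt) : F :=
  fderiv ℝ f X (dir k μ)

section Aux

variable {M : Type*} [NormedAddCommGroup M] [NormedSpace ℝ M]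

lemma my_diff_eval (f : Pt → M) (hf : ContDiff ℝ 2 f) (a : Pt) :
    Differentiable ℝ (fun Y => fderiv ℝ f Y a) := by
  have h1 : Differentiable ℝ (fderiv ℝ f) :=
    (hf.fderiv_right (m := 1) (by norm_num)).differentiable one_ne_zero
  exact h1.clm_apply (differentiable_const a)

lemma my_fderiv_eval (f : Pt → M) (hf : ContDiff ℝ 2 f) (a b X : Pt) :
    fderiv ℝ (fun Y => fderiv ℝ f Y a) X b = fderiv ℝ (fderiv ℝ f) X b a := by
  have h1 : Differentiable ℝ (fderiv ℝ f) :=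
    (hf.fderiv_right (m := 1) (by norm_num)).differentiable one_ne_zero
  rw [fderiv_clm_apply (h1 X) (differentiableAt_const a)]
  simp

lemma my_swap (f : Pt → M) (hf : ContDiff ℝ 2 f) (a b X : Pt) :
    fderiv ℝ (fun Y => fderiv ℝ f Y a) X b = fderiv ℝ (fun Y => fderiv ℝ f Y b) X a := by
  rw [my_fderiv_eval f hf a b X, my_fderiv_eval f hf b a X]
  exact (hf.contDiffAt.isSymmSndFDerivAt (by norm_num)).eq b a

lemma my_pdk_swap (f : Pt → M) (hf : ContDiff ℝ 2 f) (k k' : Fin 2) (μ μ' : Fin 4) (X : Pt) :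
    fderiv ℝ (pdk k μ f) X (dir k' μ') = fderiv ℝ (pdk k' μ' f) X (dir k μ) :=
  my_swap f hf (dir k μ) (dir k' μ') X

lemma my_pdk_diff (f : Pt → M) (hf : ContDiff ℝ 2 f) (k : Fin 2) (μ : Fin 4) :
    Differentiable ℝ (pdk k μ f) :=
  my_diff_eval f hf (dir k μ)

lemma my_const1 (G : Pt → M) (hG : Differentiable ℝ G)
    (h0 : ∀ X : Pt, ∀ κ : Fin 4, fderiv ℝ G X (dir 1 κ) = 0)
    (x₁ x₂ x₂' : Fin 4 → ℝ) : G (x₁, x₂) = G (x₁, x₂') := by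
  have hcomp : ∀ y : Fin 4 → ℝ, HasFDerivAt (fun z : Fin 4 → ℝ => G (x₁, z))
      ((fderiv ℝ G (x₁, y)).comp ((0 : (Fin 4 → ℝ) →L[ℝ] (Fin 4 → ℝ)).prod
        (ContinuousLinearMap.id ℝ (Fin 4 → ℝ)))) y := fun y =>
    ((hG (x₁, y)).hasFDerivAt).comp y (HasFDerivAt.prodMk (hasFDerivAt_const x₁ y) (hasFDerivAt_id y))
  apply is_const_of_fderiv_eq_zero (fun y => (hcomp y).differentiableAt)
  intro y
  rw [(hcomp y).fderiv]
  ext v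
  simp only [ContinuousLinearMap.comp_apply, ContinuousLinearMap.prod_apply,
    ContinuousLinearMap.zero_apply, ContinuousLinearMap.coe_id', id_eq]
  have hv : (((0 : Fin 4 → ℝ), v) : Pt) = ∑ κ : Fin 4, v κ • dir 1 κ := by
    simp only [dir, if_neg (by decide : ¬ (1 : Fin 2) = 0), Prod.smul_mk, smul_zero]
    rw [Prod.ext_iff]
    constructor
    · simp [Prod.fst_sum]
    · simp only [Prod.snd_sum]
      rw [← Finset.univ_sum_single v]
      refine Finset.sum_congr rfl fun κ _ => ?_
      ext i
      simp [Pi.single_apply]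
  rw [hv, map_sum]
  simp [h0 (x₁, y)]

lemma my_const0 (G : Pt → M) (hG : Differentiable ℝ G)
    (h0 : ∀ X : Pt, ∀ κ : Fin 4, fderiv ℝ G X (dir 0 κ) = 0)
    (x₁ x₁' x₂ : Fin 4 → ℝ) : G (x₁, x₂) = G (x₁', x₂) := by
  have hcomp : ∀ y : Fin 4 → ℝ, HasFDerivAt (fun z : Fin 4 → ℝ => G (z, x₂))
      ((fderiv ℝ G (y, x₂)).comp ((ContinuousLinearMap.id ℝ (Fin 4 → ℝ)).prod
        (0 : (Fin 4 → ℝ) →L[ℝ] (Fin 4 → ℝ)))) y := fun y =>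
    ((hG (y, x₂)).hasFDerivAt).comp y (HasFDerivAt.prodMk (hasFDerivAt_id y) (hasFDerivAt_const x₂ y))
  apply is_const_of_fderiv_eq_zero (fun y => (hcomp y).differentiableAt)
  intro y
  rw [(hcomp y).fderiv]
  ext v
  simp only [ContinuousLinearMap.comp_apply, ContinuousLinearMap.prod_apply,
    ContinuousLinearMap.zero_apply, ContinuousLinearMap.coe_id', id_eq]
  have hv : ((v, (0 : Fin 4 → ℝ)) : Pt) = ∑ κ : Fin 4, v κ • dir 0 κ := by
    simp only [dir, if_pos rfl, Prod.smul_mk, smul_zero]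
    rw [Prod.ext_iff]
    constructor
    · simp only [Prod.fst_sum]
      rw [← Finset.univ_sum_single v]
      refine Finset.sum_congr rfl fun κ _ => ?_
      ext i
      simp [Pi.single_apply]
    · simp [Prod.snd_sum]
  rw [hv, map_sum]
  simp [h0 (y, x₂)]

end Aux

theorem curl_parts_are_local
    (K : ℕ) (hK : 0 < K)
    (f₁ f₂ : Fin 4 → Pt → Matrix (Fin K) (Fin K) ℂ)
    (hf₁ : ∀ μ, ContDiff ℝ 2 (f₁ μ)) (hf₂ : ∀ μ, ContDiff ℝ 2 (f₂ μ))
    (hsym : ∀ μ ν : Fin 4, ∀ X : Pt, pdk 0 μ (f₂ ν) X = pdk 1 ν (f₁ μ) X) :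
    (∀ μ ν : Fin 4, ∀ x₁ x₂ x₂' : Fin 4 → ℝ,
        pdk 0 μ (f₁ ν) (x₁, x₂) - pdk 0 ν (f₁ μ) (x₁, x₂)
          = pdk 0 μ (f₁ ν) (x₁, x₂') - pdk 0 ν (f₁ μ) (x₁, x₂')) ∧
    (∀ μ ν : Fin 4, ∀ x₁ x₁' x₂ : Fin 4 → ℝ,
        pdk 1 μ (f₂ ν) (x₁, x₂) - pdk 1 ν (f₂ μ) (x₁, x₂)
          = pdk 1 μ (f₂ ν) (x₁', x₂) - pdk 1 ν (f₂ μ) (x₁', x₂)) := by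
  have hsym' : ∀ μ ν : Fin 4, pdk 0 μ (f₂ ν) = pdk 1 ν (f₁ μ) :=
    fun μ ν => funext (hsym μ ν)
  have key1 : ∀ μ ν κ : Fin 4, ∀ X : Pt,
      fderiv ℝ (pdk 0 μ (f₁ ν)) X (dir 1 κ) = fderiv ℝ (pdk 0 μ (f₂ κ)) X (dir 0 ν) := by
    intro μ ν κ X
    erw [my_pdk_swap (f₁ ν) (hf₁ ν) 0 1 μ κ X, ← hsym' ν κ,
      my_pdk_swap (f₂ κ) (hf₂ κ) 0 0 ν μ X]
    rfl
  have key2 : ∀ μ ν κ : Fin 4, ∀ X : Pt,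
      fderiv ℝ (pdk 1 μ (f₂ ν)) X (dir 0 κ) = fderiv ℝ (pdk 1 μ (f₁ κ)) X (dir 1 ν) := by
    intro μ ν κ X
    erw [my_pdk_swap (f₂ ν) (hf₂ ν) 1 0 μ κ X, hsym' κ ν,
      my_pdk_swap (f₁ κ) (hf₁ κ) 1 1 ν μ X]
    rfl
  constructor
  · intro μ ν x₁ x₂ x₂'
    apply my_const1 (fun X => pdk 0 μ (f₁ ν) X - pdk 0 ν (f₁ μ) X)
      ((my_pdk_diff (f₁ ν) (hf₁ ν) 0 μ).sub (my_pdk_diff (f₁ μ) (hf₁ μ) 0 ν))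
    intro X κ
    rw [fderiv_fun_sub ((my_pdk_diff (f₁ ν) (hf₁ ν) 0 μ) X) ((my_pdk_diff (f₁ μ) (hf₁ μ) 0 ν) X)]
    simp only [ContinuousLinearMap.sub_apply]
    erw [key1 μ ν κ X, key1 ν μ κ X, my_pdk_swap (f₂ κ) (hf₂ κ) 0 0 μ ν X, sub_self]
  · intro μ ν x₁ x₁' x₂
    apply my_const0 (fun X => pdk 1 μ (f₂ ν) X - pdk 1 ν (f₂ μ) X)
      ((my_pdk_diff (f₂ ν) (hf₂ ν) 1 μ).sub (my_pdk_diff (f₂ μ) (hf₂ μ) 1 ν))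
    intro X κ
    rw [fderiv_fun_sub ((my_pdk_diff (f₂ ν) (hf₂ ν) 1 μ) X) ((my_pdk_diff (f₂ μ) (hf₂ μ) 1 ν) X)]
    simp only [ContinuousLinearMap.sub_apply]
    erw [key2 μ ν κ X, key2 ν μ κ X, my_pdk_swap (f₁ κ) (hf₁ κ) 1 1 μ ν X, sub_self]
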